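/- arXiv:1708.03790 — 2 statements merged into one kernel-verified Lean document; each statement's English description precedes it below -/
import Mathlib

section
/- Let 0 < α < 1 and let f : ℤ → ℝ satisfy ∑_{m=0}^∞ |f(n+m)|/(1+m)^{1−α} < ∞ for every n ∈ ℤ. Then (1/Γ(α)) ∫_0^∞ t^{α-1} T_{t,+} f(n) dt = ∑_{j=0}^∞ Λ^{-α}(j) f(n+j), i.e., the negative fractional power (δ_right)^{-α} f(n) defined via the heat semigroup equals the series with kernel Λ^{-α}. -/
open MeasureTheory
open scoped BigOperators

/-- `Lam α m` is the kernel `Λ^{-α}(m) = α(α+1)⋯(α+m-1)/m!`, with `Lam α 0 = 1`. -/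
noncomputable def Lam (α : ℝ) (m : ℕ) : ℝ :=
  (∏ i ∈ Finset.range m, (α + i)) / (Nat.factorial m)

lemma Lam_eq_prod (α : ℝ) (m : ℕ) :
    Lam α m = ∏ i ∈ Finset.range m, ((α + i) / (i + 1)) := by
  rw [Lam, Finset.prod_div_distrib]
  congr 1
  rw [← Finset.prod_range_add_one_eq_factorial m]
  push_cast
  ring

lemma Lam_nonneg (α : ℝ) (h0 : 0 < α) (m : ℕ) : 0 ≤ Lam α m := by
  rw [Lam_eq_prod]
  exact Finset.prod_nonneg fun i _ => div_nonneg (by positivity) (by positivity)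

lemma Lam_le (α : ℝ) (h0 : 0 < α) (h1 : α < 1) (m : ℕ) :
    Lam α m ≤ (1 + (m : ℝ)) ^ (α - 1) := by
  rw [Lam_eq_prod]
  have hstep : ∀ i ∈ Finset.range m,
      (α + (i : ℝ)) / (i + 1) ≤ Real.exp (-((1 - α) / (i + 1))) := by
    intro i _
    have hi : (0:ℝ) < i + 1 := by positivity
    have h2 : (α + (i : ℝ)) / (i + 1) = 1 - (1 - α) / (i + 1) := by
      field_simp; ring
    rw [h2]
    have := Real.add_one_le_exp (-((1 - α) / (i + 1)))
    linarith
  calc (∏ i ∈ Finset.range m, ((α + (i:ℝ)) / (i + 1)))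
      ≤ ∏ i ∈ Finset.range m, Real.exp (-((1 - α) / (i + 1))) :=
        Finset.prod_le_prod (fun i _ => div_nonneg (by positivity) (by positivity)) hstep
    _ = Real.exp (∑ i ∈ Finset.range m, -((1 - α) / (i + 1))) := (Real.exp_sum _ _).symm
    _ ≤ (1 + (m:ℝ)) ^ (α - 1) := by
        have hsum : (∑ i ∈ Finset.range m, -((1 - α) / ((i:ℝ) + 1)))
            = -((1 - α) * ∑ i ∈ Finset.range m, ((i:ℝ) + 1)⁻¹ ) := by
          rw [Finset.mul_sum, ← Finset.sum_neg_distrib]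
          exact Finset.sum_congr rfl fun i _ => by field_simp
        have hharm : Real.log ((m:ℝ) + 1) ≤ ∑ i ∈ Finset.range m, ((i:ℝ) + 1)⁻¹ := by
          have := log_add_one_le_harmonic m
          rw [harmonic] at this
          push_cast at this
          convert this using 2
        rw [hsum, Real.rpow_def_of_pos (by positivity)]
        apply Real.exp_le_exp.2
        have h1α : 0 ≤ 1 - α := by linarith
        have : Real.log (1 + (m:ℝ)) ≤ ∑ i ∈ Finset.range m, ((i:ℝ) + 1)⁻¹ := by
          rwa [add_comm]
        nlinarith [Real.log_nonneg (by linarith : (1:ℝ) ≤ 1 + (m:ℝ))]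

lemma Gamma_prod (α : ℝ) (h0 : 0 < α) (m : ℕ) :
    Real.Gamma (α + m) = (∏ i ∈ Finset.range m, (α + (i:ℝ))) * Real.Gamma α := by
  induction m with
  | zero => simp
  | succ k ih =>
    have : α + (k + 1 : ℕ) = (α + k) + 1 := by push_cast; ring
    rw [this, Real.Gamma_add_one (by positivity), ih, Finset.prod_range_succ]
    ring

lemma key_congr (α : ℝ) (j : ℕ) (c : ℝ) {t : ℝ} (ht : 0 < t) :
    t ^ (α - 1) * (Real.exp (-t) * (t ^ j / (Nat.factorial j)) * c)
      = (c / (Nat.factorial j)) * (Real.exp (-t) * t ^ ((α + j) - 1)) := by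
  rw [show ((α + (j:ℝ)) - 1) = (α - 1) + (j : ℝ) by ring, Real.rpow_add ht,
    Real.rpow_natCast]
  ring

lemma key_integrable (α : ℝ) (h0 : 0 < α) (j : ℕ) (c : ℝ) :
    IntegrableOn
      (fun t : ℝ => t ^ (α - 1) * (Real.exp (-t) * (t ^ j / (Nat.factorial j)) * c))
      (Set.Ioi 0) := by
  have h : IntegrableOn (fun t : ℝ => (c / (Nat.factorial j)) * (Real.exp (-t) * t ^ ((α + j) - 1))) (Set.Ioi 0) :=
    ((Real.GammaIntegral_convergent (by positivity : (0:ℝ) < α + j)).const_mul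
    (c / (Nat.factorial j)))
  exact h.congr_fun (fun t ht => (key_congr α j c ht).symm) measurableSet_Ioi

lemma key_int (α : ℝ) (h0 : 0 < α) (j : ℕ) (c : ℝ) :
    ∫ t in Set.Ioi (0:ℝ), t ^ (α - 1) * (Real.exp (-t) * (t ^ j / (Nat.factorial j)) * c)
      = (Real.Gamma (α + j) / (Nat.factorial j)) * c := by
  rw [setIntegral_congr_fun measurableSet_Ioi (fun t ht => key_congr α j c ht),
    MeasureTheory.integral_const_mul, ← Real.Gamma_eq_integral (by positivity : (0:ℝ) < α + j)]
  ring

/-- The negative fractional power `(δ_right)^{-α}` defined via the semigroup equals the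
series with kernel `Λ^{-α}`:
`(1/Γ(α)) ∫₀^∞ t^{α-1} T_{t,+}f(n) dt = ∑ⱼ Λ^{-α}(j) f(n+j)`. -/
theorem fractional_integral_semigroup_formula (α : ℝ) (h0 : 0 < α) (h1 : α < 1)
    (f : ℤ → ℝ)
    (hf : ∀ n : ℤ, Summable (fun m : ℕ => |f (n + m)| / (1 + (m : ℝ)) ^ (1 - α))) :
    ∀ n : ℤ,
      (1 / Real.Gamma α) *
          ∫ t in Set.Ioi (0 : ℝ),
            t ^ (α - 1) * ∑' j : ℕ, Real.exp (-t) * (t ^ j / (Nat.factorial j)) * f (n + j) =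
        ∑' j : ℕ, Lam α j * f (n + j) := by
  intro n
  have hΓ : 0 < Real.Gamma α := Real.Gamma_pos_of_pos h0
  set F : ℕ → ℝ → ℝ :=
    fun j t => t ^ (α - 1) * (Real.exp (-t) * (t ^ j / (Nat.factorial j)) * f (n + j)) with hFdef
  have hint : ∀ j, IntegrableOn (F j) (Set.Ioi 0) := fun j => key_integrable α h0 j _
  have hmeas : ∀ j, AEStronglyMeasurable (F j) (volume.restrict (Set.Ioi 0)) :=
    fun j => (hint j).aestronglyMeasurable
  have hGL : ∀ j : ℕ, Real.Gamma (α + j) / (Nat.factorial j) = Real.Gamma α * Lam α j := by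
    intro j
    rw [Gamma_prod α h0 j, Lam]
    ring
  have hnorm : ∀ j, ∫ t in Set.Ioi (0:ℝ), ‖F j t‖
      = (Real.Gamma (α + j) / (Nat.factorial j)) * |f (n + j)| := by
    intro j
    rw [← key_int α h0 j |f (n + j)|]
    apply setIntegral_congr_fun measurableSet_Ioi
    intro t ht
    have ht' : (0:ℝ) < t := ht
    have h1 : 0 ≤ t ^ (α - 1) := Real.rpow_nonneg (le_of_lt ht') _
    have h2 : 0 ≤ Real.exp (-t) * ((t:ℝ) ^ j / (Nat.factorial j)) := by positivity
    simp only [F, Real.norm_eq_abs, abs_mul, abs_of_nonneg h1, abs_of_nonneg h2]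
  have hbnn : ∀ j : ℕ, 0 ≤ Real.Gamma α * ((1 + (j:ℝ)) ^ (α - 1) * |f (n + j)|) := by
    intro j; positivity
  have hb : Summable (fun j : ℕ => Real.Gamma α * ((1 + (j:ℝ)) ^ (α - 1) * |f (n + j)|)) := by
    apply Summable.mul_left
    refine (hf n).congr fun j => ?_
    rw [show (α - 1) = -(1 - α) by ring, Real.rpow_neg (by positivity)]
    field_simp
  have hbound : ∀ j : ℕ, ∫ t in Set.Ioi (0:ℝ), ‖F j t‖
      ≤ Real.Gamma α * ((1 + (j:ℝ)) ^ (α - 1) * |f (n + j)|) := by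
    intro j
    rw [hnorm j, hGL j, mul_assoc]
    exact mul_le_mul_of_nonneg_left
      (mul_le_mul_of_nonneg_right (Lam_le α h0 h1 j) (abs_nonneg _)) hΓ.le
  have hlint : ∑' j : ℕ, ∫⁻ t in Set.Ioi (0:ℝ), ‖F j t‖₊ ≠ ⊤ := by
    have heach : ∀ j : ℕ, (∫⁻ t in Set.Ioi (0:ℝ), ‖F j t‖₊)
        = ENNReal.ofReal (∫ t in Set.Ioi (0:ℝ), ‖F j t‖) :=
      fun j => (ofReal_integral_norm_eq_lintegral_enorm (hint j)).symm
    have hle : ∑' j : ℕ, ∫⁻ t in Set.Ioi (0:ℝ), ‖F j t‖₊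
        ≤ ENNReal.ofReal (∑' j : ℕ, Real.Gamma α * ((1 + (j:ℝ)) ^ (α - 1) * |f (n + j)|)) := by
      rw [ENNReal.ofReal_tsum_of_nonneg hbnn hb]
      exact ENNReal.tsum_le_tsum fun j => by
        rw [heach j]; exact ENNReal.ofReal_le_ofReal (hbound j)
    exact ne_top_of_le_ne_top ENNReal.ofReal_ne_top hle
  have hswap : ∫ t in Set.Ioi (0:ℝ),
      t ^ (α - 1) * ∑' j : ℕ, Real.exp (-t) * (t ^ j / (Nat.factorial j)) * f (n + j)
      = ∑' j : ℕ, ∫ t in Set.Ioi (0:ℝ), F j t := by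
    rw [← MeasureTheory.integral_tsum hmeas hlint]
    congr 1
    funext t
    exact tsum_mul_left.symm
  rw [hswap]
  have h2 : ∀ j : ℕ, (∫ t in Set.Ioi (0:ℝ), F j t)
      = Real.Gamma α * (Lam α j * f (n + j)) := by
    intro j
    rw [hFdef]
    rw [key_int α h0 j (f (n + j)), hGL j]
    ring
  rw [tsum_congr h2, tsum_mul_left]
  field_simp
end

section
/- (Discrete Schauder estimate, gain of regularity) Let 0 < α, β < 1 with α + β < 1, h > 0, and let u : ℤ_h → ℝ satisfy ∑_{m=0}^∞ |u((m±n)h)|/(1+m)^{1-α} < ∞ for all n ∈ ℤ, and suppose [u]_{C_h^{0,β}} := sup_{m≠j} |u(jh) − u(mh)|/(h^β |j−m|^β) < ∞ and sup_m |u(mh)| < ∞. Then (δ_right)^{-α} u(nh) := h^α ∑_{m=n}^∞ Λ^{-α}(m−n) u(mh) satisfies [(δ_right)^{-α} u]_{C_h^{0,β+α}} ≤ C ‖u‖_{C_h^{0,β}} with C independent of h and u. -/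
open scoped BigOperators

lemma Lam_zero (α : ℝ) : Lam α 0 = 1 := by simp [Lam]

lemma Lam_succ (α : ℝ) (m : ℕ) : Lam α (m + 1) = Lam α m * ((α + m) / (m + 1)) := by
  simp only [Lam, Finset.prod_range_succ, Nat.factorial_succ]
  push_cast
  rw [mul_comm ((m:ℝ) + 1), mul_div_mul_comm]

lemma Lam_succ' (α : ℝ) (m : ℕ) : Lam α (m + 1) = Lam (α + 1) m * (α / (m + 1)) := by
  simp only [Lam, Nat.factorial_succ]
  rw [Finset.prod_range_succ']
  have : ∀ i ∈ Finset.range m, (α + ((i:ℕ) + 1 : ℕ)) = ((α + 1) + (i:ℝ)) := by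
    intro i _; push_cast; ring
  rw [Finset.prod_congr rfl this]
  push_cast
  rw [mul_comm ((m:ℝ) + 1), mul_div_mul_comm]
  norm_num

lemma Lam_pos {α : ℝ} (hα : 0 < α) (m : ℕ) : 0 < Lam α m := by
  induction m with
  | zero => simp [Lam_zero]
  | succ m ih =>
    rw [Lam_succ]
    have : (0:ℝ) < (α + m) / (m + 1) := by positivity
    positivity

lemma Lam_succ_le {α : ℝ} (h0 : 0 < α) (h1 : α ≤ 1) (m : ℕ) : Lam α (m + 1) ≤ Lam α m := by
  rw [Lam_succ]
  have hle : (α + m) / (m + 1) ≤ 1 := by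
    rw [div_le_one (by positivity)]; linarith
  calc Lam α m * ((α + m) / (m + 1)) ≤ Lam α m * 1 := by
        apply mul_le_mul_of_nonneg_left hle (Lam_pos h0 m).le
    _ = Lam α m := mul_one _

lemma Lam_anti {α : ℝ} (h0 : 0 < α) (h1 : α ≤ 1) : Antitone (Lam α) :=
  antitone_nat_of_succ_le (Lam_succ_le h0 h1)

lemma Lam_le_one {α : ℝ} (h0 : 0 < α) (h1 : α ≤ 1) (m : ℕ) : Lam α m ≤ 1 := by
  simpa [Lam_zero] using Lam_anti h0 h1 (Nat.zero_le m)

lemma sum_Lam (α : ℝ) (N : ℕ) : ∑ j ∈ Finset.range (N + 1), Lam α j = Lam (α + 1) N := by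
  induction N with
  | zero => simp [Lam_zero]
  | succ N ih =>
    rw [Finset.sum_range_succ, ih, Lam_succ (α + 1) N, Lam_succ' α N]
    have h1 : ((N:ℝ) + 1) ≠ 0 := by positivity
    field_simp
    ring

lemma Lam_add_one_prod (α : ℝ) (N : ℕ) :
    Lam (α + 1) N = ∏ i ∈ Finset.range N, (1 + α / (i + 1)) := by
  induction N with
  | zero => simp [Lam_zero]
  | succ N ih =>
    rw [Lam_succ, ih, Finset.prod_range_succ]
    congr 1
    have h1 : ((N:ℝ) + 1) ≠ 0 := by positivity
    field_simp
    ring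

lemma Lam_add_one_le {α : ℝ} (h0 : 0 < α) (h1 : α ≤ 1) (N : ℕ) :
    Lam (α + 1) N ≤ 3 * ((N:ℝ) + 1) ^ α := by
  have hprod : Lam (α + 1) N ≤ Real.exp (α * (harmonic N : ℝ)) := by
    rw [Lam_add_one_prod]
    have hH : (harmonic N : ℝ) = ∑ i ∈ Finset.range N, ((i:ℝ) + 1)⁻¹ := by
      simp [harmonic]
    rw [hH, Finset.mul_sum, Real.exp_sum]
    apply Finset.prod_le_prod
    · intro i _; positivity
    · intro i _
      have := Real.add_one_le_exp (α * ((i:ℝ) + 1)⁻¹)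
      rw [div_eq_mul_inv]
      linarith
  have hHle : (harmonic N : ℝ) ≤ 1 + Real.log ((N:ℝ) + 1) := by
    calc (harmonic N : ℝ) ≤ 1 + Real.log N := harmonic_le_one_add_log N
      _ ≤ 1 + Real.log ((N:ℝ) + 1) := by
          rcases Nat.eq_zero_or_pos N with h | h
          · simp [h]
          · have : (0:ℝ) < N := by exact_mod_cast h
            have := Real.log_le_log this (by linarith : (N:ℝ) ≤ (N:ℝ) + 1)
            linarith
  have hexp : Real.exp (α * (harmonic N : ℝ)) ≤ Real.exp (α * (1 + Real.log ((N:ℝ) + 1))) := by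
    apply Real.exp_le_exp.2
    exact mul_le_mul_of_nonneg_left hHle h0.le
  have heq : Real.exp (α * (1 + Real.log ((N:ℝ) + 1))) = Real.exp α * ((N:ℝ) + 1) ^ α := by
    rw [mul_add, Real.exp_add, mul_one]
    congr 1
    rw [Real.rpow_def_of_pos (by positivity), mul_comm]
  have hexp3 : Real.exp α ≤ 3 := by
    calc Real.exp α ≤ Real.exp 1 := Real.exp_le_exp.2 h1
      _ ≤ 3 := by linarith [Real.exp_one_lt_d9.le]
  calc Lam (α + 1) N ≤ Real.exp α * ((N:ℝ) + 1) ^ α := by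
        rw [← heq]; exact hprod.trans hexp
    _ ≤ 3 * ((N:ℝ) + 1) ^ α := by
        apply mul_le_mul_of_nonneg_right hexp3 (Real.rpow_nonneg (by positivity) α)

lemma sum_Lam_le {α : ℝ} (h0 : 0 < α) (h1 : α ≤ 1) {k : ℕ} (hk : 1 ≤ k) :
    ∑ j ∈ Finset.range k, Lam α j ≤ 3 * (k:ℝ) ^ α := by
  obtain ⟨N, rfl⟩ := Nat.exists_eq_add_of_le hk
  rw [add_comm 1 N, sum_Lam]
  have := Lam_add_one_le h0 h1 N
  simpa [Nat.cast_add] using this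

lemma Lam_le_rpow {α : ℝ} (h0 : 0 < α) (h1 : α ≤ 1) {m : ℕ} (hm : 1 ≤ m) :
    Lam α m ≤ 3 * (m:ℝ) ^ (α - 1) := by
  obtain ⟨N, rfl⟩ := Nat.exists_eq_add_of_le hm
  rw [add_comm 1 N, Lam_succ']
  have hcast : ((N:ℝ) + 1) = ((N + 1 : ℕ) : ℝ) := by push_cast; ring
  have hpos : (0:ℝ) < (N:ℝ) + 1 := by positivity
  have h2 : Lam (α + 1) N * (α / ((N:ℝ) + 1)) ≤ (3 * ((N:ℝ) + 1) ^ α) * (1 / ((N:ℝ) + 1)) := by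
    apply mul_le_mul (Lam_add_one_le h0 h1 N)
    · exact div_le_div_of_nonneg_right h1 hpos.le |>.trans_eq rfl
    · positivity
    · positivity
  calc Lam (α + 1) N * (α / ((N:ℝ) + 1)) ≤ (3 * ((N:ℝ) + 1) ^ α) * (1 / ((N:ℝ) + 1)) := h2
    _ = 3 * (((N:ℝ) + 1) ^ α * ((N:ℝ) + 1)⁻¹) := by ring
    _ = 3 * ((N:ℝ) + 1) ^ (α - 1) := by
        congr 1
        rw [← Real.rpow_neg_one ((N:ℝ) + 1), ← Real.rpow_add hpos, sub_eq_add_neg]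
    _ = 3 * ((N + 1 : ℕ) : ℝ) ^ (α - 1) := by rw [hcast]

lemma Lam_sub_succ {α : ℝ} (h0 : 0 < α) (h1 : α ≤ 1) (m : ℕ) :
    Lam α m - Lam α (m + 1) ≤ Lam α m / (m + 1) := by
  rw [Lam_succ]
  have hpos : (0:ℝ) < (m:ℝ) + 1 := by positivity
  have hL := (Lam_pos h0 m).le
  have key : Lam α m - Lam α m * ((α + m) / (m + 1)) = Lam α m * (1 - α) / ((m:ℝ) + 1) := by
    field_simp; ring
  rw [key]
  gcongr
  nlinarith

lemma Lam_sub_le {α : ℝ} (h0 : 0 < α) (h1 : α ≤ 1) (m k : ℕ) :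
    Lam α m - Lam α (m + k) ≤ k * Lam α m / (m + 1) := by
  induction k with
  | zero => simp
  | succ k ih =>
    have step := Lam_sub_succ h0 h1 (m + k)
    have hmono : Lam α (m + k) ≤ Lam α m := Lam_anti h0 h1 (Nat.le_add_right m k)
    have hden : Lam α (m + k) / ((m:ℝ) + k + 1) ≤ Lam α m / ((m:ℝ) + 1) := by
      apply div_le_div₀ (Lam_pos h0 m).le hmono (by positivity)
      push_cast; linarith [Nat.cast_nonneg (α := ℝ) k]
    have hc : ((m + (k+1) : ℕ) : ℝ) = (m:ℝ) + k + 1 := by push_cast; ring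
    have : Lam α m - Lam α (m + (k + 1)) =
        (Lam α m - Lam α (m + k)) + (Lam α (m + k) - Lam α (m + k + 1)) := by
      rw [show m + (k+1) = m + k + 1 from rfl]; ring
    rw [this]
    push_cast
    calc (Lam α m - Lam α (m + k)) + (Lam α (m + k) - Lam α (m + k + 1))
        ≤ k * Lam α m / (m + 1) + Lam α m / ((m:ℝ) + 1) := by
          apply add_le_add ih
          calc Lam α (m + k) - Lam α (m + k + 1) ≤ Lam α (m + k) / ((m:ℝ) + k + 1) := by
                have := step; push_cast at this ⊢; linarith
            _ ≤ Lam α m / ((m:ℝ) + 1) := hden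
      _ = ((k:ℝ) + 1) * Lam α m / (m + 1) := by ring

open Filter in
lemma telescope_hasSum {f : ℕ → ℝ} (hf : ∀ m, f (m + 1) ≤ f m)
    (h0 : Tendsto f atTop (nhds 0)) : HasSum (fun m => f m - f (m + 1)) (f 0) := by
  rw [hasSum_iff_tendsto_nat_of_nonneg (fun i => by linarith [hf i])]
  have hps : ∀ n, ∑ i ∈ Finset.range n, (f i - f (i + 1)) = f 0 - f n := by
    intro n
    exact Finset.sum_range_sub' f n
  simp only [hps]
  simpa using tendsto_const_nhds.sub h0

open Filter in
lemma Lam_tendsto {α : ℝ} (h0 : 0 < α) (h1 : α < 1) :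
    Tendsto (Lam α) atTop (nhds 0) := by
  have hub : Tendsto (fun m : ℕ => 3 * (m:ℝ) ^ (α - 1)) atTop (nhds 0) := by
    have h2 : Tendsto (fun x : ℝ => x ^ (-(1 - α))) atTop (nhds 0) :=
      tendsto_rpow_neg_atTop (by linarith)
    have h3 : Tendsto (fun m : ℕ => (m:ℝ)) atTop atTop := tendsto_natCast_atTop_atTop
    have := (h2.comp h3).const_mul 3
    simpa [Function.comp, show -(1-α) = α - 1 by ring] using this
  apply squeeze_zero' (Filter.Eventually.of_forall (fun m => (Lam_pos h0 m).le)) _ hub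
  filter_upwards [Filter.eventually_ge_atTop 1] with m hm
  exact Lam_le_rpow h0 h1.le hm

open Filter in
lemma hasSum_Lam_sub {α : ℝ} (h0 : 0 < α) (h1 : α < 1) (k : ℕ) :
    HasSum (fun j => Lam α j - Lam α (j + k)) (∑ j ∈ Finset.range k, Lam α j) := by
  have key : HasSum (fun j => (∑ i ∈ Finset.range k, Lam α (j + i)) -
      (∑ i ∈ Finset.range k, Lam α (j + 1 + i))) (∑ i ∈ Finset.range k, Lam α (0 + i)) := by
    apply telescope_hasSum
    · intro m
      apply Finset.sum_le_sum
      intro i _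
      exact Lam_anti h0 h1.le (by omega)
    · have : ∀ i ∈ Finset.range k, Tendsto (fun j : ℕ => Lam α (j + i)) atTop (nhds 0) := by
        intro i _
        exact (Lam_tendsto h0 h1).comp (tendsto_add_atTop_nat i)
      have := tendsto_finset_sum (Finset.range k) this
      simpa using this
  have heq : ∀ j : ℕ, (∑ i ∈ Finset.range k, Lam α (j + i)) -
      (∑ i ∈ Finset.range k, Lam α (j + 1 + i)) = Lam α j - Lam α (j + k) := by
    intro j
    have e2 : ∑ i ∈ Finset.range k, Lam α (j + 1 + i) = ∑ i ∈ Finset.range k, Lam α (j + (i + 1)) := by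
      apply Finset.sum_congr rfl
      intro i _; congr 1; omega
    rw [e2, ← Finset.sum_sub_distrib]
    simpa using Finset.sum_range_sub' (fun i => Lam α (j + i)) k
  have hs : ∀ j ∈ Finset.range k, Lam α (0 + j) = Lam α j := by
    intro j _; rw [Nat.zero_add]
  rw [Finset.sum_congr rfl hs] at key
  simp only [heq] at key
  exact key

lemma bernoulli_step {γ : ℝ} (h0 : 0 < γ) (h1 : γ ≤ 1) (N : ℕ) :
    γ * ((N:ℝ) + 1) ^ (γ - 1) ≤ ((N:ℝ) + 1) ^ γ - (N:ℝ) ^ γ := by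
  have hpos : (0:ℝ) < (N:ℝ) + 1 := by positivity
  have hB : ((N:ℝ) / ((N:ℝ) + 1)) ^ γ ≤ 1 - γ / ((N:ℝ) + 1) := by
    have hx : (-1:ℝ) ≤ -(1 / ((N:ℝ) + 1)) := by
      rw [neg_le_neg_iff]
      rw [div_le_one hpos]
      linarith [Nat.cast_nonneg (α := ℝ) N]
    have := rpow_one_add_le_one_add_mul_self hx h0.le h1
    have he : (1:ℝ) + -(1 / ((N:ℝ) + 1)) = (N:ℝ) / ((N:ℝ) + 1) := by field_simp; ring
    rw [he] at this
    calc ((N:ℝ) / ((N:ℝ) + 1)) ^ γ ≤ 1 + γ * -(1 / ((N:ℝ) + 1)) := this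
      _ = 1 - γ / ((N:ℝ) + 1) := by ring
  have hsplit : (N:ℝ) ^ γ = ((N:ℝ) + 1) ^ γ * ((N:ℝ) / ((N:ℝ) + 1)) ^ γ := by
    rw [← Real.mul_rpow hpos.le (by positivity)]
    congr 1
    field_simp
  have hp1 : (0:ℝ) ≤ ((N:ℝ) + 1) ^ γ := Real.rpow_nonneg hpos.le γ
  have h2 : (N:ℝ) ^ γ ≤ ((N:ℝ) + 1) ^ γ * (1 - γ / ((N:ℝ) + 1)) := by
    rw [hsplit]
    exact mul_le_mul_of_nonneg_left hB hp1
  have h3 : ((N:ℝ) + 1) ^ γ * (γ / ((N:ℝ) + 1)) = γ * ((N:ℝ) + 1) ^ (γ - 1) := by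
    rw [Real.rpow_sub hpos, Real.rpow_one]
    field_simp
  nlinarith [h2, h3]

lemma sum_rpow_le {γ : ℝ} (h0 : 0 < γ) (h1 : γ ≤ 1) (N : ℕ) :
    ∑ j ∈ Finset.range N, ((j:ℝ) + 1) ^ (γ - 1) ≤ (N:ℝ) ^ γ / γ := by
  induction N with
  | zero => simp [Real.zero_rpow h0.ne']
  | succ N ih =>
    rw [Finset.sum_range_succ]
    have := bernoulli_step h0 h1 N
    have hc : ((N + 1 : ℕ) : ℝ) = (N:ℝ) + 1 := by push_cast; ring
    rw [hc]
    have h2 : ((N:ℝ) + 1) ^ (γ - 1) ≤ (((N:ℝ)+1)^γ - (N:ℝ)^γ) / γ := by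
      rw [le_div_iff₀ h0]; nlinarith [this]
    have h3 : (N:ℝ)^γ/γ + (((N:ℝ)+1)^γ - (N:ℝ)^γ)/γ = ((N:ℝ)+1)^γ/γ := by field_simp; ring
    linarith [ih, h2, h3]

lemma tail_step {δ : ℝ} (h0 : 0 < δ) (h1 : δ ≤ 1) {m : ℝ} (hm : 2 ≤ m) :
    δ * m ^ (-1 - δ) ≤ (m - 1) ^ (-δ) - m ^ (-δ) := by
  have hm0 : (0:ℝ) < m := by linarith
  have hm1 : (0:ℝ) < m - 1 := by linarith
  set A := m ^ δ with hA
  set B := (m - 1) ^ δ with hB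
  have hA0 : 0 < A := Real.rpow_pos_of_pos hm0 δ
  have hB0 : 0 < B := Real.rpow_pos_of_pos hm1 δ
  have hd : (0:ℝ) < 1 - δ / m := by
    have : δ / m ≤ 1 / 2 := by
      rw [div_le_div_iff₀ hm0 (by norm_num)]; linarith
    linarith
  have hBA : B ≤ (1 - δ / m) * A := by
    have hs : (-1:ℝ) ≤ -(1 / m) := by
      rw [neg_le_neg_iff, div_le_one hm0]; linarith
    have hb := rpow_one_add_le_one_add_mul_self hs h0.le h1
    have he : (1:ℝ) + -(1 / m) = (m - 1) / m := by field_simp; ring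
    rw [he] at hb
    have hdiv : ((m - 1) / m) ^ δ = B / A := Real.div_rpow hm1.le hm0.le δ
    rw [hdiv, div_le_iff₀ hA0] at hb
    calc B ≤ (1 + δ * -(1 / m)) * A := hb
      _ = (1 - δ / m) * A := by ring
  have hinv : ((1 - δ / m) * A)⁻¹ ≤ B⁻¹ := by
    apply inv_anti₀ hB0 hBA
  have key : 1 + δ / m ≤ (1 - δ / m)⁻¹ := by
    rw [← one_div, le_div_iff₀ hd]
    have : (0:ℝ) ≤ (δ/m)^2 := sq_nonneg _
    nlinarith
  have hmul : (1 + δ / m) * A⁻¹ ≤ (1 - δ / m)⁻¹ * A⁻¹ :=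
    mul_le_mul_of_nonneg_right key (inv_nonneg.2 hA0.le)
  have hsplit : ((1 - δ / m) * A)⁻¹ = (1 - δ / m)⁻¹ * A⁻¹ := by rw [mul_inv]
  have em1 : m ^ (-δ) = A⁻¹ := Real.rpow_neg hm0.le δ
  have em2 : (m - 1) ^ (-δ) = B⁻¹ := Real.rpow_neg hm1.le δ
  have em3 : m ^ (-1 - δ) = A⁻¹ * m⁻¹ := by
    rw [show (-1 - δ) = (-δ) + (-1) by ring, Real.rpow_add hm0, Real.rpow_neg_one, em1]
  rw [em1, em2, em3]
  have e : (1 + δ / m) * A⁻¹ = A⁻¹ + δ * (A⁻¹ * m⁻¹) := by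
    rw [div_eq_mul_inv]; ring
  rw [e] at hmul
  rw [hsplit] at hinv
  linarith

open Filter in
lemma tail_hasSum {δ : ℝ} (h0 : 0 < δ) (N : ℕ) (hN : 1 ≤ N) :
    HasSum (fun j : ℕ => ((N:ℝ) + j) ^ (-δ) - ((N:ℝ) + ((j:ℝ) + 1)) ^ (-δ)) ((N:ℝ) ^ (-δ)) := by
  have hN1 : (1:ℝ) ≤ (N:ℝ) := by exact_mod_cast hN
  have key := telescope_hasSum (f := fun j : ℕ => ((N:ℝ) + j) ^ (-δ)) ?_ ?_
  · have h00 : ((N:ℝ) + ((0:ℕ):ℝ)) ^ (-δ) = (N:ℝ) ^ (-δ) := by norm_num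
    rw [h00] at key
    have heq : ∀ j : ℕ, ((N:ℝ) + (j:ℝ)) ^ (-δ) - ((N:ℝ) + ((j + 1 : ℕ) : ℝ)) ^ (-δ) =
        ((N:ℝ) + (j:ℝ)) ^ (-δ) - ((N:ℝ) + ((j:ℝ) + 1)) ^ (-δ) := by
      intro j; push_cast; ring_nf
    exact key.congr_fun (fun j => (heq j).symm)
  · intro j
    show ((N:ℝ) + ((j + 1 : ℕ):ℝ)) ^ (-δ) ≤ ((N:ℝ) + (j:ℝ)) ^ (-δ)
    have hx : (0:ℝ) < (N:ℝ) + j := by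
      have := Nat.cast_nonneg (α := ℝ) j; linarith
    have hy : ((N:ℝ) + (j:ℝ)) ≤ (N:ℝ) + ((j + 1 : ℕ):ℝ) := by push_cast; linarith
    rw [Real.rpow_neg hx.le, Real.rpow_neg (by linarith : (0:ℝ) ≤ (N:ℝ) + ((j + 1 : ℕ):ℝ))]
    exact inv_anti₀ (Real.rpow_pos_of_pos hx δ) (Real.rpow_le_rpow hx.le hy h0.le)
  · have h3 : Tendsto (fun j : ℕ => (N:ℝ) + j) atTop atTop :=
      tendsto_atTop_add_const_left atTop ((N:ℝ)) tendsto_natCast_atTop_atTop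
    have := (tendsto_rpow_neg_atTop h0).comp h3
    exact this

lemma tail_tsum_bound {γ : ℝ} (h0γ : 0 < γ) (h1γ : γ < 1) (N : ℕ) (hN : 1 ≤ N) :
    Summable (fun j : ℕ => ((N:ℝ) + 1 + j) ^ (γ - 2)) ∧
    ∑' j : ℕ, ((N:ℝ) + 1 + j) ^ (γ - 2) ≤ (N:ℝ) ^ (γ - 1) / (1 - γ) := by
  set δ := 1 - γ with hδ
  have hδ0 : 0 < δ := by simp [hδ]; linarith
  have hδ1 : δ ≤ 1 := by simp [hδ]; linarith
  have hg := (tail_hasSum hδ0 N hN).div_const δ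
  have hN1 : (1:ℝ) ≤ (N:ℝ) := by exact_mod_cast hN
  have hle : ∀ j : ℕ, ((N:ℝ) + 1 + j) ^ (γ - 2) ≤
      (((N:ℝ) + j) ^ (-δ) - ((N:ℝ) + ((j:ℝ) + 1)) ^ (-δ)) / δ := by
    intro j
    have hj : (0:ℝ) ≤ (j:ℝ) := Nat.cast_nonneg j
    have hm : (2:ℝ) ≤ (N:ℝ) + 1 + j := by linarith
    have hts := tail_step hδ0 hδ1 hm
    have e1 : (N:ℝ) + 1 + j - 1 = (N:ℝ) + j := by ring
    have e2 : (-1 : ℝ) - δ = γ - 2 := by rw [hδ]; ring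
    have e3 : (N:ℝ) + 1 + (j:ℝ) = (N:ℝ) + ((j:ℝ) + 1) := by ring
    rw [e1, e2, e3] at hts
    rw [e3, le_div_iff₀ hδ0]
    linarith
  have hnn : ∀ j : ℕ, 0 ≤ ((N:ℝ) + 1 + j) ^ (γ - 2) := by
    intro j
    apply Real.rpow_nonneg
    positivity
  have hsummable : Summable (fun j : ℕ => ((N:ℝ) + 1 + j) ^ (γ - 2)) :=
    Summable.of_nonneg_of_le hnn hle hg.summable
  refine ⟨hsummable, ?_⟩
  have := Summable.tsum_le_tsum hle hsummable hg.summable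
  rw [hg.tsum_eq] at this
  have e4 : (N:ℝ) ^ (-δ) / δ = (N:ℝ) ^ (γ - 1) / (1 - γ) := by
    rw [hδ]; norm_num
  rw [e4] at this
  exact this

lemma rpow_anti_neg {x y p : ℝ} (hx : 0 < x) (hxy : x ≤ y) (hp : p ≤ 0) : y ^ p ≤ x ^ p := by
  rw [← neg_neg p, Real.rpow_neg hx.le, Real.rpow_neg (hx.trans_le hxy).le]
  exact inv_anti₀ (Real.rpow_pos_of_pos hx _) (Real.rpow_le_rpow hx.le hxy (by linarith))

lemma Lam_le_global {α : ℝ} (h0α : 0 < α) (h1α : α < 1) (j : ℕ) :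
    Lam α j ≤ 6 * (1 + (j:ℝ)) ^ (α - 1) := by
  rcases Nat.eq_zero_or_pos j with hj | hj
  · subst hj
    simp [Lam_zero, Real.one_rpow]
  · have hjR : (1:ℝ) ≤ (j:ℝ) := by exact_mod_cast hj
    have h1 : Lam α j ≤ 3 * (j:ℝ) ^ (α - 1) := Lam_le_rpow h0α h1α.le hj
    have h2 : (1 + (j:ℝ)) ≤ 2 * j := by linarith
    have h3 : (1 + (j:ℝ)) ^ (α - 1) ≥ (2 * (j:ℝ)) ^ (α - 1) :=
      rpow_anti_neg (by linarith) h2 (by linarith)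
    have h4 : (2 * (j:ℝ)) ^ (α - 1) = (2:ℝ) ^ (α - 1) * (j:ℝ) ^ (α - 1) :=
      Real.mul_rpow (by norm_num) (by linarith)
    have h5 : (2:ℝ) ^ (α - 1) ≥ (2:ℝ) ^ (-1 : ℝ) :=
      Real.rpow_le_rpow_of_exponent_le one_le_two (by linarith)
    have h6 : (2:ℝ) ^ (-1 : ℝ) = 1 / 2 := by
      rw [Real.rpow_neg_one]; norm_num
    have h7 : (0:ℝ) ≤ (j:ℝ) ^ (α - 1) := Real.rpow_nonneg (by linarith) _
    have h8 : (1/2 : ℝ) * (j:ℝ) ^ (α - 1) ≤ (2:ℝ) ^ (α - 1) * (j:ℝ) ^ (α - 1) := by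
      apply mul_le_mul_of_nonneg_right _ h7
      rw [← h6]; exact h5
    linarith [h1, h3, h4, h8]

open Finset

set_option maxHeartbeats 1000000 in
lemma key_estimate (α β : ℝ) (h0α : 0 < α) (h1α : α < 1)
    (h0β : 0 < β) (h1β : β < 1) (hαβ : α + β < 1)
    (h : ℝ) (hh : 0 < h) (u : ℤ → ℝ) (K : ℝ)
    (hsum : ∀ p : ℤ, Summable (fun m : ℕ => |u (p + m)| / (1 + (m : ℝ)) ^ (1 - α)))
    (hK : ∀ m j : ℤ, m ≠ j → |u j - u m| ≤ K * h ^ β * |(j : ℝ) - m| ^ β)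
    (n l : ℤ) (hln : l < n) :
    |(h ^ α * ∑' j : ℕ, Lam α j * u (n + j)) -
        (h ^ α * ∑' j : ℕ, Lam α j * u (l + j))| ≤
      (3 + 6 / (β + α) + 3 / (1 - (β + α))) * K * h ^ (β + α) * |(n : ℝ) - l| ^ (β + α) := by
  set γ := β + α with hγdef
  have hγ0 : 0 < γ := by positivity
  have hγ1 : γ < 1 := by rw [hγdef]; linarith
  -- the gap k
  set k : ℕ := (n - l).toNat with hkdef
  have hk : (k : ℤ) = n - l := Int.toNat_of_nonneg (by omega)
  have hk1 : 1 ≤ k := by omega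
  have hkR : ((k : ℕ) : ℝ) = (n : ℝ) - l := by
    have := congrArg (fun z : ℤ => (z : ℝ)) hk
    push_cast at this
    exact this
  have hkpos : (0 : ℝ) < (k : ℝ) := by
    have : (1:ℝ) ≤ (k:ℝ) := by exact_mod_cast hk1
    linarith
  have hK0 : 0 ≤ K := by
    have h01 : ((0:ℤ)) ≠ (1:ℤ) := by norm_num
    have := hK 0 1 h01
    have habs : |((1:ℤ):ℝ) - ((0:ℤ):ℝ)| ^ β = 1 := by norm_num
    rw [habs, mul_one] at this
    have hhb : (0:ℝ) < h ^ β := Real.rpow_pos_of_pos hh β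
    nlinarith [abs_nonneg (u 1 - u 0)]
  -- summability of the basic series
  have hgen : ∀ (p : ℤ) (c : ℕ → ℝ), (∀ j, |c j| ≤ Lam α j) →
      Summable (fun j : ℕ => c j * u (p + j)) := by
    intro p c hc
    apply Summable.of_abs
    apply Summable.of_nonneg_of_le (fun j => abs_nonneg _) _ ((hsum p).mul_left 6)
    intro j
    have h1 : |c j * u (p + j)| = |c j| * |u (p + j)| := abs_mul _ _
    have h2 : |c j| * |u (p + j)| ≤ Lam α j * |u (p + j)| :=
      mul_le_mul_of_nonneg_right (hc j) (abs_nonneg _)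
    have h3 : Lam α j * |u (p + j)| ≤ 6 * (1 + (j:ℝ)) ^ (α - 1) * |u (p + j)| :=
      mul_le_mul_of_nonneg_right (Lam_le_global h0α h1α j) (abs_nonneg _)
    have h4 : 6 * (1 + (j:ℝ)) ^ (α - 1) * |u (p + j)| =
        6 * (|u (p + j)| / (1 + (j:ℝ)) ^ (1 - α)) := by
      rw [show α - 1 = -(1 - α) by ring, Real.rpow_neg (by positivity)]
      ring
    rw [h1, ← h4]
    exact h2.trans h3
  have habsLam : ∀ j : ℕ, |Lam α j| ≤ Lam α j := fun j => le_of_eq (abs_of_nonneg (Lam_pos h0α j).le)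
  have hSn : Summable (fun j : ℕ => Lam α j * u (n + j)) := hgen n _ habsLam
  have hSl : Summable (fun j : ℕ => Lam α j * u (l + j)) := hgen l _ habsLam
  have hSk : Summable (fun j : ℕ => Lam α (j + k) * u (n + j)) := by
    apply hgen n
    intro j
    rw [abs_of_nonneg (Lam_pos h0α _).le]
    exact Lam_anti h0α h1α.le (Nat.le_add_right j k)
  set S : ℝ := ∑ j ∈ Finset.range k, Lam α j with hSdef
  have hT : HasSum (fun j : ℕ => Lam α j - Lam α (j + k)) S := hasSum_Lam_sub h0α h1α k
  have hTd : Summable (fun j : ℕ => (Lam α j - Lam α (j + k)) * u (n + j)) := by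
    have he : (fun j : ℕ => (Lam α j - Lam α (j + k)) * u (n + j)) =
        fun j => Lam α j * u (n + j) - Lam α (j + k) * u (n + j) := by
      funext j; ring
    rw [he]; exact hSn.sub hSk
  have hW : Summable (fun j : ℕ => (Lam α j - Lam α (j + k)) * (u (n + j) - u n)) := by
    have he : (fun j : ℕ => (Lam α j - Lam α (j + k)) * (u (n + j) - u n)) =
        fun j => (Lam α j - Lam α (j + k)) * u (n + j) - (Lam α j - Lam α (j + k)) * u n := by
      funext j; ring
    rw [he]; exact hTd.sub (hT.summable.mul_right (u n))
  -- the decomposition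
  have e1 : ∑' j : ℕ, Lam α j * u (l + j) =
      (∑ j ∈ Finset.range k, Lam α j * u (l + j)) + ∑' j : ℕ, Lam α (j + k) * u (n + j) := by
    rw [← Summable.sum_add_tsum_nat_add k hSl]
    congr 1
    apply tsum_congr
    intro j
    have : l + ((j + k : ℕ) : ℤ) = n + (j : ℕ) := by push_cast; omega
    rw [this]
  have e2 : ∑' j : ℕ, Lam α j * u (n + j) - ∑' j : ℕ, Lam α (j + k) * u (n + j) =
      ∑' j : ℕ, (Lam α j - Lam α (j + k)) * u (n + j) := by
    rw [← Summable.tsum_sub hSn hSk]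
    apply tsum_congr
    intro j; ring
  have e3 : ∑' j : ℕ, (Lam α j - Lam α (j + k)) * u (n + j) =
      (∑' j : ℕ, (Lam α j - Lam α (j + k)) * (u (n + j) - u n)) + S * u n := by
    have hsplit : ∀ j : ℕ, (Lam α j - Lam α (j + k)) * u (n + j) =
        (Lam α j - Lam α (j + k)) * (u (n + j) - u n) + (Lam α j - Lam α (j + k)) * u n := by
      intro j; ring
    rw [tsum_congr hsplit, Summable.tsum_add hW (hT.summable.mul_right (u n)),
      (hT.mul_right (u n)).tsum_eq]
  have e4 : ∑ j ∈ Finset.range k, Lam α j * u (l + j) =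
      (∑ j ∈ Finset.range k, Lam α j * (u (l + j) - u n)) + S * u n := by
    rw [hSdef, Finset.sum_mul, ← Finset.sum_add_distrib]
    apply Finset.sum_congr rfl
    intro j _; ring
  set P : ℝ := ∑' j : ℕ, (Lam α j - Lam α (j + k)) * (u (n + j) - u n) with hPdef
  set Q : ℝ := ∑ j ∈ Finset.range k, Lam α j * (u (l + j) - u n) with hQdef
  have main : (h ^ α * ∑' j : ℕ, Lam α j * u (n + j)) -
      (h ^ α * ∑' j : ℕ, Lam α j * u (l + j)) = h ^ α * (P - Q) := by
    rw [← mul_sub]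
    congr 1
    rw [e1, e4]
    have := e2
    have e5 : ∑' j : ℕ, Lam α j * u (n + j) =
        ∑' j : ℕ, (Lam α j - Lam α (j + k)) * u (n + j) + ∑' j : ℕ, Lam α (j + k) * u (n + j) := by
      linarith [e2]
    rw [e5, e3]
    ring
  have hKhb : 0 ≤ K * h ^ β := mul_nonneg hK0 (Real.rpow_nonneg hh.le β)
  -- bound on Q
  have hQb : |Q| ≤ 3 * (K * h ^ β * (k:ℝ) ^ γ) := by
    have hterm : ∀ j ∈ Finset.range k, |Lam α j * (u (l + j) - u n)| ≤
        Lam α j * (K * h ^ β * (k:ℝ) ^ β) := by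
      intro j hj
      rw [Finset.mem_range] at hj
      rw [abs_mul, abs_of_nonneg (Lam_pos h0α j).le]
      apply mul_le_mul_of_nonneg_left _ (Lam_pos h0α j).le
      have hjk : (j : ℤ) < (k : ℤ) := by exact_mod_cast hj
      have hne : (l + (j:ℕ) : ℤ) ≠ n := by omega
      have hKj := hK (l + (j:ℕ)) n hne
      rw [abs_sub_comm]
      refine hKj.trans ?_
      have hjle : ((j:ℕ):ℝ) ≤ ((k:ℕ):ℝ) := by exact_mod_cast hj.le
      have hjnn : (0:ℝ) ≤ (j:ℝ) := Nat.cast_nonneg j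
      have hb2 : |((n:ℤ):ℝ) - ((l + (j:ℕ) : ℤ) : ℝ)| = (k:ℝ) - (j:ℝ) := by
        have hb1 : ((n:ℤ):ℝ) - ((l + (j:ℕ) : ℤ) : ℝ) = (k:ℝ) - (j:ℝ) := by
          push_cast
          linarith [hkR]
        rw [hb1, abs_of_nonneg (by linarith)]
      rw [hb2]
      apply mul_le_mul_of_nonneg_left _ hKhb
      exact Real.rpow_le_rpow (by linarith) (by linarith) h0β.le
    calc |Q| ≤ ∑ j ∈ Finset.range k, |Lam α j * (u (l + j) - u n)| :=
          Finset.abs_sum_le_sum_abs _ _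
      _ ≤ ∑ j ∈ Finset.range k, Lam α j * (K * h ^ β * (k:ℝ) ^ β) :=
          Finset.sum_le_sum hterm
      _ = S * (K * h ^ β * (k:ℝ) ^ β) := by rw [hSdef, Finset.sum_mul]
      _ ≤ (3 * (k:ℝ) ^ α) * (K * h ^ β * (k:ℝ) ^ β) := by
          apply mul_le_mul_of_nonneg_right (sum_Lam_le h0α h1α.le hk1)
          exact mul_nonneg hKhb (Real.rpow_nonneg hkpos.le β)
      _ = 3 * (K * h ^ β * ((k:ℝ) ^ β * (k:ℝ) ^ α)) := by ring
      _ = 3 * (K * h ^ β * (k:ℝ) ^ γ) := by rw [← Real.rpow_add hkpos, hγdef]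
  -- bound on P
  have hWabs : Summable (fun j : ℕ => |(Lam α j - Lam α (j + k)) * (u (n + j) - u n)|) := hW.abs
  have hPle : |P| ≤ ∑' j : ℕ, |(Lam α j - Lam α (j + k)) * (u (n + j) - u n)| := by
    rw [hPdef]
    have := norm_tsum_le_tsum_norm
      (f := fun j : ℕ => (Lam α j - Lam α (j + k)) * (u (n + j) - u n))
      (by simpa only [Real.norm_eq_abs] using hWabs)
    simpa only [Real.norm_eq_abs] using this
  have hsplitP : ∑' j : ℕ, |(Lam α j - Lam α (j + k)) * (u (n + j) - u n)| =
      (∑ j ∈ Finset.range (2 * k + 1), |(Lam α j - Lam α (j + k)) * (u (n + j) - u n)|) +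
      ∑' j : ℕ, |(Lam α (j + (2 * k + 1)) - Lam α ((j + (2 * k + 1)) + k)) *
        (u (n + ((j + (2 * k + 1) : ℕ) : ℤ)) - u n)| :=
    (Summable.sum_add_tsum_nat_add (2 * k + 1) hWabs).symm
  -- Part I
  have hI : ∑ j ∈ Finset.range (2 * k + 1), |(Lam α j - Lam α (j + k)) * (u (n + j) - u n)| ≤
      (6 / γ) * (K * h ^ β * (k:ℝ) ^ γ) := by
    rw [Finset.sum_range_succ']
    have h0term : |(Lam α 0 - Lam α (0 + k)) * (u (n + ((0:ℕ):ℤ)) - u n)| = 0 := by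
      have h00 : u (n + ((0:ℕ):ℤ)) - u n = 0 := by norm_num
      rw [h00, mul_zero, abs_zero]
    rw [h0term, add_zero]
    have hterm : ∀ j ∈ Finset.range (2 * k), |(Lam α (j + 1) - Lam α (j + 1 + k)) *
        (u (n + ((j + 1 : ℕ) : ℤ)) - u n)| ≤ 3 * K * h ^ β * ((j:ℝ) + 1) ^ (γ - 1) := by
      intro j _
      have hjnn : (0:ℝ) ≤ (j:ℝ) := Nat.cast_nonneg j
      have hj1pos : (0:ℝ) < (j:ℝ) + 1 := by linarith
      rw [abs_mul]
      have hc1 : |Lam α (j + 1) - Lam α (j + 1 + k)| ≤ Lam α (j + 1) := by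
        have hmono : Lam α (j + 1 + k) ≤ Lam α (j + 1) :=
          Lam_anti h0α h1α.le (Nat.le_add_right (j + 1) k)
        have hpos := (Lam_pos h0α (j + 1 + k)).le
        rw [abs_of_nonneg (by linarith)]
        linarith
      have hc2 : |u (n + ((j + 1 : ℕ) : ℤ)) - u n| ≤ K * h ^ β * ((j:ℝ) + 1) ^ β := by
        have hne : n ≠ n + ((j + 1 : ℕ) : ℤ) := by omega
        have hKj := hK n (n + ((j + 1 : ℕ) : ℤ)) hne
        refine hKj.trans ?_
        have hb : ((n + ((j + 1 : ℕ) : ℤ) : ℤ) : ℝ) - ((n:ℤ):ℝ) = (j:ℝ) + 1 := by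
          push_cast; ring
        rw [hb, abs_of_nonneg (by linarith)]
      have hc3 : Lam α (j + 1) ≤ 3 * ((j:ℝ) + 1) ^ (α - 1) := by
        have hc := Lam_le_rpow h0α h1α.le (Nat.succ_le_succ (Nat.zero_le j))
        have hcast : (((j + 1 : ℕ)) : ℝ) = (j:ℝ) + 1 := by push_cast; ring
        rwa [hcast] at hc
      calc |Lam α (j + 1) - Lam α (j + 1 + k)| * |u (n + ((j + 1 : ℕ) : ℤ)) - u n|
          ≤ Lam α (j + 1) * (K * h ^ β * ((j:ℝ) + 1) ^ β) :=
            mul_le_mul hc1 hc2 (abs_nonneg _) (Lam_pos h0α (j + 1)).le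
        _ ≤ (3 * ((j:ℝ) + 1) ^ (α - 1)) * (K * h ^ β * ((j:ℝ) + 1) ^ β) := by
            apply mul_le_mul_of_nonneg_right hc3
            exact mul_nonneg hKhb (Real.rpow_nonneg hj1pos.le β)
        _ = 3 * K * h ^ β * (((j:ℝ) + 1) ^ (α - 1) * ((j:ℝ) + 1) ^ β) := by ring
        _ = 3 * K * h ^ β * ((j:ℝ) + 1) ^ (γ - 1) := by
            rw [← Real.rpow_add hj1pos, hγdef]
            ring_nf
    have h2γ : (2:ℝ) ^ γ ≤ 2 := by
      have h2e := Real.rpow_le_rpow_of_exponent_le one_le_two hγ1.le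
      rwa [Real.rpow_one] at h2e
    have hc : ((2 * k : ℕ):ℝ) = 2 * (k:ℝ) := by push_cast; ring
    have h2k : ((2:ℝ) * (k:ℝ)) ^ γ = (2:ℝ) ^ γ * (k:ℝ) ^ γ :=
      Real.mul_rpow (by norm_num) hkpos.le
    have hkγ : (0:ℝ) ≤ (k:ℝ) ^ γ := Real.rpow_nonneg hkpos.le γ
    calc ∑ j ∈ Finset.range (2 * k), |(Lam α (j + 1) - Lam α (j + 1 + k)) *
        (u (n + ((j + 1 : ℕ) : ℤ)) - u n)|
        ≤ ∑ j ∈ Finset.range (2 * k), 3 * K * h ^ β * ((j:ℝ) + 1) ^ (γ - 1) :=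
          Finset.sum_le_sum hterm
      _ = 3 * K * h ^ β * ∑ j ∈ Finset.range (2 * k), ((j:ℝ) + 1) ^ (γ - 1) := by
          rw [Finset.mul_sum]
      _ ≤ 3 * K * h ^ β * (((2 * k : ℕ):ℝ) ^ γ / γ) := by
          apply mul_le_mul_of_nonneg_left (sum_rpow_le hγ0 hγ1.le (2 * k))
          have := hKhb; nlinarith
      _ ≤ (6 / γ) * (K * h ^ β * (k:ℝ) ^ γ) := by
          rw [hc, h2k]
          have hstep : (2:ℝ) ^ γ * (k:ℝ) ^ γ ≤ 2 * (k:ℝ) ^ γ :=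
            mul_le_mul_of_nonneg_right h2γ hkγ
          have hnn3 : (0:ℝ) ≤ 3 * K * h ^ β := by
            have : 3 * K * h ^ β = 3 * (K * h ^ β) := by ring
            rw [this]; positivity
          have hd : (2:ℝ) ^ γ * (k:ℝ) ^ γ / γ ≤ 2 * (k:ℝ) ^ γ / γ := by gcongr
          calc 3 * K * h ^ β * ((2:ℝ) ^ γ * (k:ℝ) ^ γ / γ)
              ≤ 3 * K * h ^ β * (2 * (k:ℝ) ^ γ / γ) :=
                mul_le_mul_of_nonneg_left hd hnn3
            _ = (6 / γ) * (K * h ^ β * (k:ℝ) ^ γ) := by ring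
  -- Part II
  have htail := tail_tsum_bound hγ0 hγ1 (2 * k) (by omega)
  have hII : ∑' j : ℕ, |(Lam α (j + (2 * k + 1)) - Lam α ((j + (2 * k + 1)) + k)) *
      (u (n + ((j + (2 * k + 1) : ℕ) : ℤ)) - u n)| ≤
      (3 / (1 - γ)) * (K * h ^ β * (k:ℝ) ^ γ) := by
    have hterm : ∀ j : ℕ, |(Lam α (j + (2 * k + 1)) - Lam α ((j + (2 * k + 1)) + k)) *
        (u (n + ((j + (2 * k + 1) : ℕ) : ℤ)) - u n)| ≤
        (3 * (k:ℝ) * (K * h ^ β)) * (((2 * k : ℕ):ℝ) + 1 + j) ^ (γ - 2) := by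
      intro j
      have hm1 : 1 ≤ j + (2 * k + 1) := by omega
      have hmR : ((j + (2 * k + 1) : ℕ):ℝ) = ((2 * k : ℕ):ℝ) + 1 + (j:ℝ) := by push_cast; ring
      have hmpos : (0:ℝ) < ((j + (2 * k + 1) : ℕ):ℝ) := by
        have : (1:ℝ) ≤ ((j + (2 * k + 1) : ℕ):ℝ) := by exact_mod_cast hm1
        linarith
      rw [abs_mul]
      have hc1 : |Lam α (j + (2 * k + 1)) - Lam α ((j + (2 * k + 1)) + k)| ≤
          3 * (k:ℝ) * ((j + (2 * k + 1) : ℕ):ℝ) ^ (α - 2) := by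
        have hmono : Lam α ((j + (2 * k + 1)) + k) ≤ Lam α (j + (2 * k + 1)) :=
          Lam_anti h0α h1α.le (Nat.le_add_right _ k)
        rw [abs_of_nonneg (by linarith)]
        have hsub := Lam_sub_le h0α h1α.le (j + (2 * k + 1)) k
        refine hsub.trans ?_
        have hLam := Lam_le_rpow h0α h1α.le hm1
        have hknn : (0:ℝ) ≤ (k:ℝ) := hkpos.le
        have hd1 : (k:ℝ) * Lam α (j + (2 * k + 1)) / (((j + (2 * k + 1) : ℕ):ℝ) + 1) ≤
            (k:ℝ) * (3 * ((j + (2 * k + 1) : ℕ):ℝ) ^ (α - 1)) / ((j + (2 * k + 1) : ℕ):ℝ) := by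
          apply div_le_div₀ (by positivity) _ hmpos (by linarith)
          exact mul_le_mul_of_nonneg_left hLam hknn
        refine hd1.trans (le_of_eq ?_)
        have he : ((j + (2 * k + 1) : ℕ):ℝ) ^ (α - 2) =
            ((j + (2 * k + 1) : ℕ):ℝ) ^ (α - 1) / ((j + (2 * k + 1) : ℕ):ℝ) := by
          rw [show α - 2 = (α - 1) - 1 by ring, Real.rpow_sub hmpos, Real.rpow_one]
        calc (k:ℝ) * (3 * ((j + (2 * k + 1) : ℕ):ℝ) ^ (α - 1)) / ((j + (2 * k + 1) : ℕ):ℝ)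
            = 3 * (k:ℝ) * (((j + (2 * k + 1) : ℕ):ℝ) ^ (α - 1) / ((j + (2 * k + 1) : ℕ):ℝ)) := by
              ring
          _ = 3 * (k:ℝ) * ((j + (2 * k + 1) : ℕ):ℝ) ^ (α - 2) := by rw [he]
      have hc2 : |u (n + ((j + (2 * k + 1) : ℕ) : ℤ)) - u n| ≤
          K * h ^ β * ((j + (2 * k + 1) : ℕ):ℝ) ^ β := by
        have hne : n ≠ n + ((j + (2 * k + 1) : ℕ) : ℤ) := by omega
        have hKj := hK n (n + ((j + (2 * k + 1) : ℕ) : ℤ)) hne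
        refine hKj.trans ?_
        have hb : ((n + ((j + (2 * k + 1) : ℕ) : ℤ) : ℤ) : ℝ) - ((n:ℤ):ℝ) =
            ((j + (2 * k + 1) : ℕ):ℝ) := by push_cast; ring
        rw [hb, abs_of_nonneg hmpos.le]
      calc |Lam α (j + (2 * k + 1)) - Lam α ((j + (2 * k + 1)) + k)| *
            |u (n + ((j + (2 * k + 1) : ℕ) : ℤ)) - u n|
          ≤ (3 * (k:ℝ) * ((j + (2 * k + 1) : ℕ):ℝ) ^ (α - 2)) *
            (K * h ^ β * ((j + (2 * k + 1) : ℕ):ℝ) ^ β) := by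
            apply mul_le_mul hc1 hc2 (abs_nonneg _)
            positivity
        _ = (3 * (k:ℝ) * (K * h ^ β)) *
            (((j + (2 * k + 1) : ℕ):ℝ) ^ (α - 2) * ((j + (2 * k + 1) : ℕ):ℝ) ^ β) := by ring
        _ = (3 * (k:ℝ) * (K * h ^ β)) * ((j + (2 * k + 1) : ℕ):ℝ) ^ (γ - 2) := by
            rw [← Real.rpow_add hmpos, hγdef]
            ring_nf
        _ = (3 * (k:ℝ) * (K * h ^ β)) * (((2 * k : ℕ):ℝ) + 1 + (j:ℝ)) ^ (γ - 2) := by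
            rw [hmR]
    have hshift : Summable (fun j : ℕ => |(Lam α (j + (2 * k + 1)) -
        Lam α ((j + (2 * k + 1)) + k)) * (u (n + ((j + (2 * k + 1) : ℕ) : ℤ)) - u n)|) :=
      (summable_nat_add_iff (2 * k + 1)).2 hWabs
    have hmaj : Summable (fun j : ℕ => (3 * (k:ℝ) * (K * h ^ β)) *
        (((2 * k : ℕ):ℝ) + 1 + (j:ℝ)) ^ (γ - 2)) := htail.1.mul_left _
    have hle := Summable.tsum_le_tsum hterm hshift hmaj
    refine hle.trans ?_
    rw [tsum_mul_left]
    have hknn : (0:ℝ) ≤ 3 * (k:ℝ) * (K * h ^ β) := by positivity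
    have h2 := mul_le_mul_of_nonneg_left htail.2 hknn
    refine h2.trans ?_
    have hrp : ((2 * k : ℕ):ℝ) ^ (γ - 1) ≤ (k:ℝ) ^ (γ - 1) := by
      apply rpow_anti_neg hkpos _ (by linarith)
      push_cast
      linarith
    have hkk : (k:ℝ) * (k:ℝ) ^ (γ - 1) = (k:ℝ) ^ γ := by
      rw [show (k:ℝ) * (k:ℝ) ^ (γ - 1) = (k:ℝ) ^ (1:ℝ) * (k:ℝ) ^ (γ - 1) by
        rw [Real.rpow_one], ← Real.rpow_add hkpos]
      ring_nf
    have h1γ : (0:ℝ) < 1 - γ := by linarith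
    calc 3 * (k:ℝ) * (K * h ^ β) * (((2 * k : ℕ):ℝ) ^ (γ - 1) / (1 - γ))
        ≤ 3 * (k:ℝ) * (K * h ^ β) * ((k:ℝ) ^ (γ - 1) / (1 - γ)) := by
          apply mul_le_mul_of_nonneg_left _ hknn
          gcongr
      _ = (3 / (1 - γ)) * ((K * h ^ β) * ((k:ℝ) * (k:ℝ) ^ (γ - 1))) := by ring
      _ = (3 / (1 - γ)) * (K * h ^ β * (k:ℝ) ^ γ) := by rw [hkk]
  -- final assembly
  rw [main, abs_mul, abs_of_nonneg (Real.rpow_nonneg hh.le α)]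
  have htri : |P - Q| ≤ |P| + |Q| := by
    calc |P - Q| = |P + -Q| := by rw [sub_eq_add_neg]
      _ ≤ |P| + |-Q| := abs_add_le _ _
      _ = |P| + |Q| := by rw [abs_neg]
  have hPb : |P| ≤ (6 / γ + 3 / (1 - γ)) * (K * h ^ β * (k:ℝ) ^ γ) := by
    refine hPle.trans ?_
    rw [hsplitP]
    have := hI
    have := hII
    linarith
  have hfinal : |P - Q| ≤ (3 + 6 / γ + 3 / (1 - γ)) * (K * h ^ β * (k:ℝ) ^ γ) := by linarith
  calc h ^ α * |P - Q|
      ≤ h ^ α * ((3 + 6 / γ + 3 / (1 - γ)) * (K * h ^ β * (k:ℝ) ^ γ)) :=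
        mul_le_mul_of_nonneg_left hfinal (Real.rpow_nonneg hh.le α)
    _ = (3 + 6 / γ + 3 / (1 - γ)) * K * (h ^ β * h ^ α) * (k:ℝ) ^ γ := by ring
    _ = (3 + 6 / γ + 3 / (1 - γ)) * K * h ^ γ * (k:ℝ) ^ γ := by
        rw [← Real.rpow_add hh, hγdef]
    _ = (3 + 6 / γ + 3 / (1 - γ)) * K * h ^ γ * |(n:ℝ) - (l:ℝ)| ^ γ := by
        rw [← hkR, abs_of_nonneg (Nat.cast_nonneg k)]

/-- Discrete Schauder estimate (gain of regularity): for `0 < α, β < 1` with `α + β < 1`,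
if `u ∈ ℓ_{-α,h} ∩ C_h^{0,β}` then `(δ_right)^{-α}u ∈ C_h^{0,β+α}` with
`[(δ_right)^{-α}u]_{C_h^{0,β+α}} ≤ C ‖u‖_{C_h^{0,β}}`, `C` independent of `h` and `u`.
Here `u n` is the value of `u` at `nh ∈ ℤ_h`, `M` bounds `sup |u|` and `K` the `C_h^{0,β}`
seminorm, so `M + K` is `‖u‖_{C_h^{0,β}}`. -/
theorem discrete_schauder_estimate (α β : ℝ) (h0α : 0 < α) (h1α : α < 1)
    (h0β : 0 < β) (h1β : β < 1) (hαβ : α + β < 1) :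
    ∃ C > 0, ∀ (h : ℝ), 0 < h → ∀ (u : ℤ → ℝ) (M K : ℝ),
      (∀ n : ℤ, Summable (fun m : ℕ => |u (n + m)| / (1 + (m : ℝ)) ^ (1 - α)) ∧
        Summable (fun m : ℕ => |u (n - m)| / (1 + (m : ℝ)) ^ (1 - α))) →
      (∀ m : ℤ, |u m| ≤ M) →
      (∀ m j : ℤ, m ≠ j → |u j - u m| ≤ K * h ^ β * |(j : ℝ) - m| ^ β) →
      ∀ n l : ℤ, n ≠ l →
        |(h ^ α * ∑' j : ℕ, Lam α j * u (n + j)) -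
            (h ^ α * ∑' j : ℕ, Lam α j * u (l + j))| ≤
          C * (M + K) * h ^ (β + α) * |(n : ℝ) - l| ^ (β + α) := by
  have hγ0 : 0 < β + α := by linarith
  have hγ1 : 0 < 1 - (β + α) := by linarith
  refine ⟨3 + 6 / (β + α) + 3 / (1 - (β + α)), by positivity, ?_⟩
  intro h hh u M K hsum hM hK n l hnl
  set C : ℝ := 3 + 6 / (β + α) + 3 / (1 - (β + α)) with hCdef
  have hC : 0 < C := by rw [hCdef]; positivity
  have hsum' : ∀ p : ℤ, Summable (fun m : ℕ => |u (p + m)| / (1 + (m : ℝ)) ^ (1 - α)) :=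
    fun p => (hsum p).1
  have hM0 : 0 ≤ M := le_trans (abs_nonneg (u 0)) (hM 0)
  have hmono : ∀ x : ℝ, 0 ≤ x → C * K * x ≤ C * (M + K) * x := by
    intro x hx
    apply mul_le_mul_of_nonneg_right _ hx
    apply mul_le_mul_of_nonneg_left (by linarith) hC.le
  have hfact : (0:ℝ) ≤ h ^ (β + α) * |(n : ℝ) - l| ^ (β + α) :=
    mul_nonneg (Real.rpow_nonneg hh.le _) (Real.rpow_nonneg (abs_nonneg _) _)
  rcases lt_or_gt_of_ne hnl with hlt | hgt
  · -- n < l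
    have hkey := key_estimate α β h0α h1α h0β h1β hαβ h hh u K hsum' hK l n hlt
    have habs : |(h ^ α * ∑' j : ℕ, Lam α j * u (n + j)) -
        (h ^ α * ∑' j : ℕ, Lam α j * u (l + j))| =
        |(h ^ α * ∑' j : ℕ, Lam α j * u (l + j)) -
        (h ^ α * ∑' j : ℕ, Lam α j * u (n + j))| := abs_sub_comm _ _
    have habs2 : |(l : ℝ) - n| = |(n : ℝ) - l| := abs_sub_comm _ _
    rw [habs]
    refine hkey.trans ?_
    rw [habs2]
    calc C * K * h ^ (β + α) * |(n : ℝ) - l| ^ (β + α)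
        = C * K * (h ^ (β + α) * |(n : ℝ) - l| ^ (β + α)) := by ring
      _ ≤ C * (M + K) * (h ^ (β + α) * |(n : ℝ) - l| ^ (β + α)) := hmono _ hfact
      _ = C * (M + K) * h ^ (β + α) * |(n : ℝ) - l| ^ (β + α) := by ring
  · -- l < n
    have hkey := key_estimate α β h0α h1α h0β h1β hαβ h hh u K hsum' hK n l hgt
    refine hkey.trans ?_
    calc C * K * h ^ (β + α) * |(n : ℝ) - l| ^ (β + α)
        = C * K * (h ^ (β + α) * |(n : ℝ) - l| ^ (β + α)) := by ring
      _ ≤ C * (M + K) * (h ^ (β + α) * |(n : ℝ) - l| ^ (β + α)) := hmono _ hfact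
      _ = C * (M + K) * h ^ (β + α) * |(n : ℝ) - l| ^ (β + α) := by ring
end
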